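/- Let p : Ω → Υ be a continuous surjection of Hausdorff spaces such that every y ∈ Υ has an open neighbourhood U with closure of p⁻¹(U) compact in Ω. Let C be a (Hausdorff) compactification of Υ with boundary ∂Υ = C \ Υ. Then Ω ⊔ ∂Υ, equipped with the smallest topology making the inclusion Ω ↪ Ω ⊔ ∂Υ an open embedding and the map p ⊔ id : Ω ⊔ ∂Υ → C continuous, is a compact Hausdorff space. -/

import Mathlib

/-- Let `p : Ω → Υ` be a continuous surjection of Hausdorff spaces such
that each `y ∈ Υ` has an open neighbourhood `U` with `closure (p⁻¹(U))` compact, and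
let `C` be a compactification of `Υ` (a compact Hausdorff space containing `Υ` as a
dense subspace via an embedding `ι`). Then `Ω ⊔ ∂Υ` (with `∂Υ = C \ Υ`), equipped
with the smallest topology making `Ω ↪ Ω ⊔ ∂Υ` open and `p ⊔ id : Ω ⊔ ∂Υ → C`
continuous, is a compact Hausdorff space. -/
theorem stmt7 {Ω Υ C : Type}
    [TopologicalSpace Ω] [TopologicalSpace Υ] [TopologicalSpace C]
    [T2Space Ω] [T2Space Υ] [CompactSpace C] [T2Space C]
    (p : Ω → Υ) (hp : Continuous p) (hsurj : Function.Surjective p)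
    (hloc : ∀ y : Υ, ∃ U : Set Υ, IsOpen U ∧ y ∈ U ∧ IsCompact (closure (p ⁻¹' U)))
    (ι : Υ → C) (hι : Topology.IsEmbedding ι) (hdense : DenseRange ι) :
    @CompactSpace (Ω ⊕ {c : C // c ∉ Set.range ι})
        (TopologicalSpace.generateFrom
          ({s | ∃ U : Set Ω, IsOpen U ∧ s = Sum.inl '' U} ∪
           {s | ∃ V : Set C, IsOpen V ∧
              s = (Sum.elim (ι ∘ p) Subtype.val) ⁻¹' V})) ∧
    @T2Space (Ω ⊕ {c : C // c ∉ Set.range ι})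
        (TopologicalSpace.generateFrom
          ({s | ∃ U : Set Ω, IsOpen U ∧ s = Sum.inl '' U} ∪
           {s | ∃ V : Set C, IsOpen V ∧
              s = (Sum.elim (ι ∘ p) Subtype.val) ⁻¹' V})) := by
  classical
  set X := Ω ⊕ {c : C // c ∉ Set.range ι} with hX
  set q : X → C := Sum.elim (ι ∘ p) Subtype.val with hqdef
  set S : Set (Set X) :=
    ({s | ∃ U : Set Ω, IsOpen U ∧ s = Sum.inl '' U} ∪
     {s | ∃ V : Set C, IsOpen V ∧ s = q ⁻¹' V}) with hS
  letI tX : TopologicalSpace X := TopologicalSpace.generateFrom S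
  -- basic open sets
  have hopen1 : ∀ U : Set Ω, IsOpen U → IsOpen (Sum.inl '' U : Set X) := fun U hU =>
    TopologicalSpace.isOpen_generateFrom_of_mem (Or.inl ⟨U, hU, rfl⟩)
  have hopen2 : ∀ V : Set C, IsOpen V → IsOpen (q ⁻¹' V) := fun V hV =>
    TopologicalSpace.isOpen_generateFrom_of_mem (Or.inr ⟨V, hV, rfl⟩)
  have hqinl : ∀ V : Set C, Sum.inl ⁻¹' (q ⁻¹' V) = (ι ∘ p) ⁻¹' V := fun V => rfl
  -- S is a topological basis
  have hB : @TopologicalSpace.IsTopologicalBasis X tX S := by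
    refine ⟨?_, ?_, rfl⟩
    · rintro t₁ (⟨U₁, hU₁, rfl⟩ | ⟨V₁, hV₁, rfl⟩) t₂ (⟨U₂, hU₂, rfl⟩ | ⟨V₂, hV₂, rfl⟩) x hx
      · refine ⟨Sum.inl '' (U₁ ∩ U₂), Or.inl ⟨U₁ ∩ U₂, hU₁.inter hU₂, rfl⟩, ?_, ?_⟩
        · rw [Set.image_inter Sum.inl_injective]; exact hx
        · rw [Set.image_inter Sum.inl_injective]
      · refine ⟨Sum.inl '' (U₁ ∩ (ι ∘ p) ⁻¹' V₂),
          Or.inl ⟨_, hU₁.inter ((hι.continuous.comp hp).isOpen_preimage _ hV₂), rfl⟩, ?_, ?_⟩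
        · rw [← hqinl V₂, Set.image_inter_preimage]; exact hx
        · rw [← hqinl V₂, Set.image_inter_preimage]
      · refine ⟨Sum.inl '' (U₂ ∩ (ι ∘ p) ⁻¹' V₁),
          Or.inl ⟨_, hU₂.inter ((hι.continuous.comp hp).isOpen_preimage _ hV₁), rfl⟩, ?_, ?_⟩
        · rw [← hqinl V₁, Set.image_inter_preimage]; exact ⟨hx.2, hx.1⟩
        · rw [← hqinl V₁, Set.image_inter_preimage, Set.inter_comm]
      · exact ⟨q ⁻¹' (V₁ ∩ V₂), Or.inr ⟨V₁ ∩ V₂, hV₁.inter hV₂, rfl⟩, hx, le_rfl⟩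
    · apply Set.eq_univ_of_univ_subset
      intro x _
      exact ⟨q ⁻¹' Set.univ, Or.inr ⟨Set.univ, isOpen_univ, rfl⟩, Set.mem_univ _⟩
  -- inl is continuous
  have hcont_inl : Continuous (Sum.inl : Ω → X) := by
    rw [show tX = TopologicalSpace.generateFrom S from rfl, continuous_generateFrom_iff]
    rintro s (⟨U, hU, rfl⟩ | ⟨V, hV, rfl⟩)
    · rwa [Set.preimage_image_eq U Sum.inl_injective]
    · exact (hι.continuous.comp hp).isOpen_preimage _ hV
  -- key local lemma
  have key : ∀ y : Υ, ∃ (V : Set C) (K : Set Ω), IsOpen V ∧ ι y ∈ V ∧ IsCompact K ∧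
      q ⁻¹' V ⊆ Sum.inl '' K ∧ V ⊆ ι '' (p '' K) := by
    intro y
    obtain ⟨U, hU, hyU, hK⟩ := hloc y
    set K := closure (p ⁻¹' U) with hKdef
    obtain ⟨t, ht, htU⟩ := hι.isInducing.isOpen_iff.mp hU
    have himg : ι '' U = t ∩ Set.range ι := by
      rw [← htU, Set.image_preimage_eq_inter_range]
    have hUK : U ⊆ p '' K := by
      intro u hu
      obtain ⟨ω, rfl⟩ := hsurj u
      exact ⟨ω, subset_closure hu, rfl⟩
    have hcompC : IsCompact (ι '' (p '' K)) := ((hK.image hp).image hι.continuous)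
    have htsub : t ⊆ ι '' (p '' K) := by
      calc t ⊆ closure (t ∩ Set.range ι) := hdense.open_subset_closure_inter ht
        _ = closure (ι '' U) := by rw [himg]
        _ ⊆ closure (ι '' (p '' K)) := closure_mono (Set.image_mono hUK)
        _ = ι '' (p '' K) := hcompC.isClosed.closure_eq
    refine ⟨t, K, ht, by rw [← htU] at hyU; exact hyU, hK, ?_, htsub⟩
    rintro (ω | c) hx
    · have h1 : ι (p ω) ∈ t ∩ Set.range ι := ⟨hx, Set.mem_range_self _⟩
      rw [← himg] at h1
      obtain ⟨u, hu, he⟩ := h1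
      have : u = p ω := hι.injective he
      exact ⟨ω, subset_closure (by rw [Set.mem_preimage, ← this]; exact hu), rfl⟩
    · exact absurd (htsub hx) (fun ⟨u, _, he⟩ => c.2 ⟨u, he⟩)
  constructor
  · -- compactness
    constructor
    rw [isCompact_iff_finite_subcover]
    intro idx Us hUs hcov
    have main : ∀ c : C, ∃ V : Set C, IsOpen V ∧ c ∈ V ∧
        ∃ s : Finset idx, q ⁻¹' V ⊆ ⋃ i ∈ s, Us i := by
      intro c
      by_cases hc : c ∈ Set.range ι
      · obtain ⟨y, rfl⟩ := hc
        obtain ⟨V, K, hVopen, hyV, hKcomp, hsub, _⟩ := key y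
        have hKX : IsCompact (Sum.inl '' K : Set X) := hKcomp.image hcont_inl
        obtain ⟨s, hs⟩ := hKX.elim_finite_subcover Us hUs
          (fun x _ => hcov (Set.mem_univ x))
        exact ⟨V, hVopen, hyV, s, fun x hx => hs (hsub hx)⟩
      · have hx : (Sum.inr ⟨c, hc⟩ : X) ∈ ⋃ i, Us i := hcov (Set.mem_univ _)
        obtain ⟨i, hxi⟩ := Set.mem_iUnion.mp hx
        obtain ⟨v, hvS, hxv, hvU⟩ := hB.exists_subset_of_mem_open hxi (hUs i)
        rcases hvS with ⟨U, _, rfl⟩ | ⟨V, hV, rfl⟩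
        · exact absurd hxv (by rintro ⟨ω, _, h⟩; exact Sum.inl_ne_inr h)
        · refine ⟨V, hV, hxv, {i}, fun x hx' => ?_⟩
          simp only [Finset.mem_singleton, Set.mem_iUnion]
          exact ⟨i, rfl, hvU hx'⟩
    choose V hVopen hVmem s hs using main
    obtain ⟨T, hT⟩ := isCompact_univ.elim_finite_subcover V hVopen
      (fun c _ => Set.mem_iUnion.mpr ⟨c, hVmem c⟩)
    refine ⟨T.biUnion s, fun x _ => ?_⟩
    have : q x ∈ ⋃ c ∈ T, V c := hT (Set.mem_univ _)
    obtain ⟨c, hcT, hc⟩ := Set.mem_iUnion₂.mp this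
    obtain ⟨i, his, hxi⟩ := Set.mem_iUnion₂.mp (hs c hc)
    exact Set.mem_iUnion₂.mpr ⟨i, Finset.mem_biUnion.mpr ⟨c, hcT, his⟩, hxi⟩
  · -- Hausdorff
    constructor
    rintro (a | c) (b | d) hxy
    · have hab : a ≠ b := fun h => hxy (congrArg Sum.inl h)
      obtain ⟨u, v, hu, hv, hau, hbv, huv⟩ := t2_separation hab
      exact ⟨Sum.inl '' u, Sum.inl '' v, hopen1 u hu, hopen1 v hv,
        ⟨a, hau, rfl⟩, ⟨b, hbv, rfl⟩,
        (Set.disjoint_image_iff Sum.inl_injective).mpr huv⟩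
    · -- inl a vs inr d
      obtain ⟨V, K, hVopen, haV, hKcomp, _, hVsub⟩ := key (p a)
      have hcl : IsClosed (ι '' (p '' K)) := ((hKcomp.image hp).image hι.continuous).isClosed
      refine ⟨q ⁻¹' V, q ⁻¹' (ι '' (p '' K))ᶜ, hopen2 V hVopen, hopen2 _ hcl.isOpen_compl,
        haV, ?_, Disjoint.preimage q (disjoint_compl_right.mono_left hVsub)⟩
      exact fun h => d.2 (let ⟨u, _, he⟩ := h; ⟨u, he⟩)
    · -- inr c vs inl b
      obtain ⟨V, K, hVopen, hbV, hKcomp, _, hVsub⟩ := key (p b)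
      have hcl : IsClosed (ι '' (p '' K)) := ((hKcomp.image hp).image hι.continuous).isClosed
      refine ⟨q ⁻¹' (ι '' (p '' K))ᶜ, q ⁻¹' V, hopen2 _ hcl.isOpen_compl, hopen2 V hVopen,
        ?_, hbV, Disjoint.preimage q (disjoint_compl_right.mono_left hVsub).symm⟩
      exact fun h => c.2 (let ⟨u, _, he⟩ := h; ⟨u, he⟩)
    · have hcd : (c : C) ≠ d := fun h => hxy (congrArg Sum.inr (Subtype.ext h))
      obtain ⟨u, v, hu, hv, hcu, hdv, huv⟩ := t2_separation hcd
      exact ⟨q ⁻¹' u, q ⁻¹' v, hopen2 u hu, hopen2 v hv, hcu, hdv, Disjoint.preimage q huv⟩
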